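/- Let p ≥ 2 be an even integer and X : [0,T] → ℝ a continuous function in V_p(π) admitting continuous local times of order p for X, X⁺ and X⁻ along π. Then L^X_t(0) = L^{X⁺}_t(0) = lim_{n→∞} Σ_{[t_j,t_{j+1}]∈π_n, t_j≤t} 1_{{X(t_j)=0}}(X⁺(t_{j+1}))^{p-1}, and also L^X_t(0) = L^{X⁻}_t(0) = lim_{n→∞} Σ_{[t_j,t_{j+1}]∈π_n, t_j≤t} 1_{{X(t_j)=0}}(X⁻(t_{j+1}))^{p-1}, for every t ∈ [0,T]. -/

import Mathlib

open Filter MeasureTheory Set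

/-- A nested sequence of partitions `0 = t_0^n < t_1^n < ... < t_{N(n)}^n = T` of `[0, T]`. -/
structure PartitionSeq (T : ℝ) where
  N : ℕ → ℕ
  pos : ∀ n, 0 < N n
  pt : ℕ → ℕ → ℝ
  pt_zero : ∀ n, pt n 0 = 0
  pt_last : ∀ n, pt n (N n) = T
  pt_mono : ∀ n, ∀ j, j < N n → pt n j < pt n (j + 1)
  nested : ∀ n, ∀ j, j ≤ N n → ∃ j', j' ≤ N (n + 1) ∧ pt (n + 1) j' = pt n j

/-- Oscillation of `S` along the partition `π_n`. -/
noncomputable def oscP {T : ℝ} (S : ℝ → ℝ) (P : PartitionSeq T) (n : ℕ) : ℝ :=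
  sSup {y | ∃ j < P.N n, ∃ u ∈ Icc (P.pt n j) (P.pt n (j + 1)),
    ∃ v ∈ Icc (P.pt n j) (P.pt n (j + 1)), y = |S u - S v|}

/-- Mesh of the partition `π_n`. -/
noncomputable def meshP {T : ℝ} (P : PartitionSeq T) (n : ℕ) : ℝ :=
  sSup {y | ∃ j < P.N n, y = P.pt n (j + 1) - P.pt n j}

/-- Partial sums `Σ_{t_j ≤ t} |S(t_{j+1}) - S(t_j)|^p` of `p`-th variation along `π_n`. -/
noncomputable def pvarSum {T : ℝ} (S : ℝ → ℝ) (P : PartitionSeq T) (p : ℝ) (n : ℕ) (t : ℝ) : ℝ :=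
  ∑ j ∈ Finset.range (P.N n),
    if P.pt n j ≤ t then |S (P.pt n (j + 1)) - S (P.pt n j)| ^ p else 0

/-- Discrete local time of order `p` of `S` along `π_n`:
`L_t^{π_n;p}(x) = Σ_{t_j ≤ t} 1_{⦇S(t_j),S(t_{j+1})⦈}(x) |S(t_{j+1}) - x|^{p-1}`. -/
noncomputable def discLT {T : ℝ} (S : ℝ → ℝ) (P : PartitionSeq T) (p : ℕ) (n : ℕ)
    (t x : ℝ) : ℝ :=
  ∑ j ∈ Finset.range (P.N n),
    if P.pt n j ≤ t then
      Set.indicator (Set.uIoc (S (P.pt n j)) (S (P.pt n (j + 1))))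
        (fun _ => |S (P.pt n (j + 1)) - x| ^ (p - 1)) x
    else 0

/-- `S` has a continuous local time `L` of order `p` along `P`: the oscillations tend to `0`,
the discrete local times converge uniformly in `x` for each `t ∈ [0,T]`, and the limit is
jointly continuous. -/
def HasCLT {T : ℝ} (P : PartitionSeq T) (p : ℕ) (S : ℝ → ℝ) (L : ℝ → ℝ → ℝ) : Prop :=
  Tendsto (oscP S P) atTop (nhds 0) ∧
  (∀ t ∈ Icc (0 : ℝ) T, TendstoUniformly (fun n x => discLT S P p n t x) (fun x => L t x) atTop) ∧
  Continuous (fun q : ℝ × ℝ => L q.1 q.2)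

/-- `S ∈ V_p(π)` with `p`-th variation function `V`. -/
def HasPVar {T : ℝ} (P : PartitionSeq T) (p : ℝ) (S : ℝ → ℝ) (V : ℝ → ℝ) : Prop :=
  Tendsto (oscP S P) atTop (nhds 0) ∧
  ContinuousOn V (Icc 0 T) ∧ MonotoneOn V (Icc 0 T) ∧
  ∀ t ∈ Icc (0 : ℝ) T, Tendsto (fun n => pvarSum S P p n t) atTop (nhds (V t))
section Aux

variable {T : ℝ}

/-- Partition points are monotone in the index. -/
lemma PartitionSeq.ptLe (P : PartitionSeq T) (n : ℕ) :
    ∀ {i k : ℕ}, i ≤ k → k ≤ P.N n → P.pt n i ≤ P.pt n k := by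
  intro i k hik hk
  induction k with
  | zero =>
    obtain rfl : i = 0 := Nat.le_zero.mp hik
    exact le_refl _
  | succ m ih =>
    rcases Nat.eq_or_lt_of_le hik with rfl | h
    · exact le_refl _
    · exact le_trans (ih (Nat.lt_succ_iff.mp h) (le_trans (Nat.le_succ m) hk))
        (le_of_lt (P.pt_mono n m (by omega)))

lemma PartitionSeq.pt_mem_Icc (P : PartitionSeq T) (n : ℕ) {j : ℕ} (hj : j ≤ P.N n) :
    P.pt n j ∈ Icc (0 : ℝ) T := by
  constructor
  · have := P.ptLe n (Nat.zero_le j) hj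
    rwa [P.pt_zero n] at this
  · have := P.ptLe n hj (le_refl (P.N n))
    rwa [P.pt_last n] at this

/-- Increments along the partition are bounded by the oscillation. -/
lemma abs_le_oscP (P : PartitionSeq T) {X : ℝ → ℝ}
    (hXc : ContinuousOn X (Icc 0 T)) (n : ℕ) {j : ℕ} (hj : j < P.N n) :
    |X (P.pt n (j + 1)) - X (P.pt n j)| ≤ oscP X P n := by
  obtain ⟨C, hC⟩ := (isCompact_Icc).exists_bound_of_continuousOn hXc
  apply le_csSup
  · refine ⟨2 * C, ?_⟩
    rintro y ⟨k, hk, u, hu, v, hv, rfl⟩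
    have hsub : Icc (P.pt n k) (P.pt n (k + 1)) ⊆ Icc (0 : ℝ) T := by
      apply Icc_subset_Icc
      · exact (P.pt_mem_Icc n (le_of_lt hk)).1
      · exact (P.pt_mem_Icc n hk).2
    have h1 := hC u (hsub hu)
    have h2 := hC v (hsub hv)
    rw [Real.norm_eq_abs] at h1 h2
    calc |X u - X v| ≤ |X u| + |X v| := abs_sub _ _
      _ ≤ C + C := add_le_add h1 h2
      _ = 2 * C := by ring
  · refine ⟨j, hj, P.pt n (j + 1), ⟨le_of_lt (P.pt_mono n j hj), le_refl _⟩,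
      P.pt n j, ⟨le_refl _, le_of_lt (P.pt_mono n j hj)⟩, rfl⟩

lemma mem_uIoc_iff' {u v z : ℝ} : z ∈ Set.uIoc u v ↔ min u v < z ∧ z ≤ max u v := by
  rw [Set.uIoc, Set.mem_Ioc]

/-- Termwise equality of the discrete local-time summands at a positive level, for small
increments. -/
lemma indicator_term_eq {p : ℕ} {a b z : ℝ} (hz : 0 < z) (h : |b - a| < z) :
    Set.indicator (Set.uIoc a b) (fun _ => |b - z| ^ (p - 1)) z
      = Set.indicator (Set.uIoc (max a 0) (max b 0)) (fun _ => |max b 0 - z| ^ (p - 1)) z := by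
  by_cases hm : z ∈ Set.uIoc a b
  · obtain ⟨h1, h2⟩ := mem_uIoc_iff'.mp hm
    have hb : 0 ≤ b := by
      by_contra hb
      push_neg at hb
      have hza : z ≤ a := by
        rcases max_cases a b with ⟨he, _⟩ | ⟨he, _⟩
        · rw [he] at h2; exact h2
        · rw [he] at h2; linarith
      have : z < |b - a| := by
        rw [abs_sub_comm, abs_of_nonneg (by linarith)]
        linarith
      linarith
    have hm' : z ∈ Set.uIoc (max a 0) (max b 0) := by
      refine mem_uIoc_iff'.mpr ⟨?_, ?_⟩
      · rcases min_lt_iff.mp h1 with h | h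
        · exact min_lt_iff.mpr (Or.inl (max_lt h hz))
        · exact min_lt_iff.mpr (Or.inr (max_lt h hz))
      · exact le_trans h2 (max_le_max (le_max_left a 0) (le_max_left b 0))
    rw [Set.indicator_of_mem hm, Set.indicator_of_mem hm', max_eq_left hb]
  · have hm' : z ∉ Set.uIoc (max a 0) (max b 0) := by
      intro hc
      obtain ⟨h1, h2⟩ := mem_uIoc_iff'.mp hc
      apply hm
      refine mem_uIoc_iff'.mpr ⟨?_, ?_⟩
      · exact lt_of_le_of_lt (le_min (le_trans (min_le_left a b) (le_max_left a 0))
          (le_trans (min_le_right a b) (le_max_left b 0))) h1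
      · by_contra hcon
        push_neg at hcon
        have : max (max a 0) (max b 0) < z :=
          max_lt (max_lt (lt_of_le_of_lt (le_max_left a b) hcon) hz)
            (max_lt (lt_of_le_of_lt (le_max_right a b) hcon) hz)
        linarith
    rw [Set.indicator_of_notMem hm, Set.indicator_of_notMem hm']

/-- At a positive level, once increments are smaller than the level, the discrete local
times of `X` and `X⁺` coincide. -/
lemma discLT_pos_eq (P : PartitionSeq T) (p n : ℕ) (t : ℝ) {X : ℝ → ℝ} {z : ℝ} (hz : 0 < z)
    (h : ∀ j < P.N n, |X (P.pt n (j + 1)) - X (P.pt n j)| < z) :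
    discLT X P p n t z = discLT (fun s => max (X s) 0) P p n t z := by
  unfold discLT
  apply Finset.sum_congr rfl
  intro j hj
  rw [Finset.mem_range] at hj
  by_cases hjt : P.pt n j ≤ t
  · simp only [if_pos hjt]
    exact indicator_term_eq hz (h j hj)
  · simp [hjt]

/-- The discrete local time of a nonnegative path vanishes at level `0`. -/
lemma discLT_nonneg_zero {S : ℝ → ℝ} (P : PartitionSeq T) (p n : ℕ) (t : ℝ)
    (hS : ∀ y, 0 ≤ S y) :
    discLT S P p n t 0 = 0 := by
  unfold discLT
  apply Finset.sum_eq_zero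
  intro j _
  have hnm : (0 : ℝ) ∉ Set.uIoc (S (P.pt n j)) (S (P.pt n (j + 1))) := by
    intro hmem
    have h1 := (mem_uIoc_iff'.mp hmem).1
    have h0 : (0 : ℝ) ≤ min (S (P.pt n j)) (S (P.pt n (j + 1))) := le_min (hS _) (hS _)
    linarith
  rw [Set.indicator_of_notMem hnm]
  simp

/-- The continuous local time of a nonnegative path vanishes at level `0`. -/
lemma clt_zero (P : PartitionSeq T) (p : ℕ) {S : ℝ → ℝ} {L' : ℝ → ℝ → ℝ}
    (hS : ∀ y, 0 ≤ S y) (hCLT : HasCLT P p S L') {t : ℝ} (ht : t ∈ Icc (0 : ℝ) T) :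
    L' t 0 = 0 := by
  have h := (hCLT.2.1 t ht).tendsto_at 0
  have h' : Tendsto (fun _ : ℕ => (0 : ℝ)) atTop (nhds (L' t 0)) :=
    h.congr (fun n => discLT_nonneg_zero P p n t hS)
  exact (tendsto_nhds_unique h' tendsto_const_nhds)

set_option maxHeartbeats 1000000 in
/-- Key estimate: the sums over intervals starting at a zero of `X` tend to `0`. -/
lemma sum_tendsto_zero (P : PartitionSeq T) {p : ℕ} (hp2 : 2 ≤ p)
    (X : ℝ → ℝ) {S : ℝ → ℝ} (hS : ∀ y, 0 ≤ S y) (hS0 : ∀ y, X y = 0 → S y = 0)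
    {L' : ℝ → ℝ → ℝ} (hCLT : HasCLT P p S L') {t : ℝ} (ht : t ∈ Icc (0 : ℝ) T) :
    Tendsto (fun n => ∑ j ∈ Finset.range (P.N n),
        if P.pt n j ≤ t ∧ X (P.pt n j) = 0 then (S (P.pt n (j + 1))) ^ (p - 1) else 0)
      atTop (nhds 0) := by
  have hL'0 : L' t 0 = 0 := clt_zero P p hS hCLT ht
  have hcont : Continuous fun z : ℝ => L' t z :=
    hCLT.2.2.comp (continuous_const.prodMk continuous_id)
  rw [NormedAddCommGroup.tendsto_nhds_zero]
  intro ε hε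
  set c : ℝ := 2 ^ (p - 1) with hc
  have hcpos : (0 : ℝ) < c := by positivity
  have hc1 : (1 : ℝ) ≤ c := one_le_pow₀ one_le_two
  set ε₁ : ℝ := ε / (4 * c) with hε₁def
  have hε₁ : 0 < ε₁ := by positivity
  -- small levels have small local time
  have htend : Tendsto (fun z : ℝ => L' t z) (nhds 0) (nhds 0) := by
    have := hcont.tendsto 0
    rwa [hL'0] at this
  obtain ⟨z₀, hz₀pos, hz₀⟩ := Metric.eventually_nhds_iff.mp
    (htend.eventually (gt_mem_nhds hε₁))
  -- uniform convergence
  have hunif := Metric.tendstoUniformly_iff.mp (hCLT.2.1 t ht) ε₁ hε₁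
  filter_upwards [hunif] with n hn
  -- choose the level z for this n
  set z : ℝ := min (min (z₀ / 2) 1) (ε₁ / (P.N n)) with hzdef
  have hNpos : (0 : ℝ) < (P.N n : ℝ) := Nat.cast_pos.mpr (P.pos n)
  have hzpos : 0 < z := by
    apply lt_min (lt_min (by linarith) one_pos)
    positivity
  have hz1 : z ≤ 1 := le_trans (min_le_left _ _) (min_le_right _ _)
  have hzz₀ : dist z 0 < z₀ := by
    rw [Real.dist_eq, sub_zero, abs_of_pos hzpos]
    calc z ≤ z₀ / 2 := le_trans (min_le_left _ _) (min_le_left _ _)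
      _ < z₀ := by linarith
  have hzN : z * (P.N n : ℝ) ≤ ε₁ := by
    have : z ≤ ε₁ / (P.N n : ℝ) := min_le_right _ _
    calc z * (P.N n : ℝ) ≤ (ε₁ / (P.N n : ℝ)) * (P.N n : ℝ) :=
          mul_le_mul_of_nonneg_right this (le_of_lt hNpos)
      _ = ε₁ := div_mul_cancel₀ _ (ne_of_gt hNpos)
  -- the discrete local time at level z is small
  have hd : discLT S P p n t z ≤ 2 * ε₁ := by
    have h1 := hn z
    have h2 : L' t z < ε₁ := hz₀ hzz₀
    have := abs_lt.mp (by rwa [Real.dist_eq] at h1)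
    linarith [this.1]
  -- termwise estimate
  have hterm : ∀ j ∈ Finset.range (P.N n),
      (if P.pt n j ≤ t ∧ X (P.pt n j) = 0 then (S (P.pt n (j + 1))) ^ (p - 1) else 0)
        ≤ c * ((if P.pt n j ≤ t then
            Set.indicator (Set.uIoc (S (P.pt n j)) (S (P.pt n (j + 1))))
              (fun _ => |S (P.pt n (j + 1)) - z| ^ (p - 1)) z else 0) + z) := by
    intro j _
    have hind_nonneg : 0 ≤ (if P.pt n j ≤ t then
        Set.indicator (Set.uIoc (S (P.pt n j)) (S (P.pt n (j + 1))))
          (fun _ => |S (P.pt n (j + 1)) - z| ^ (p - 1)) z else 0) := by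
      split
      · exact Set.indicator_nonneg (fun x _ => by positivity) z
      · exact le_refl _
    by_cases hcond : P.pt n j ≤ t ∧ X (P.pt n j) = 0
    · rw [if_pos hcond, if_pos hcond.1]
      have hSa : S (P.pt n j) = 0 := hS0 _ hcond.2
      set s : ℝ := S (P.pt n (j + 1)) with hsdef
      have hs0 : 0 ≤ s := hS _
      by_cases hsz : s ≤ z
      · have h1 : s ^ (p - 1) ≤ z ^ (p - 1) := pow_le_pow_left₀ hs0 hsz _
        have h2 : z ^ (p - 1) ≤ z := by
          calc z ^ (p - 1) ≤ z ^ 1 := pow_le_pow_of_le_one (le_of_lt hzpos) hz1 (by omega)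
            _ = z := pow_one z
        have := Set.indicator_nonneg
          (fun x _ => by positivity : ∀ x ∈ Set.uIoc (S (P.pt n j)) s,
            0 ≤ |s - z| ^ (p - 1)) z
        nlinarith
      · push_neg at hsz
        have hmem : z ∈ Set.uIoc (S (P.pt n j)) s := by
          rw [hSa]
          refine mem_uIoc_iff'.mpr ⟨?_, ?_⟩
          · exact lt_of_le_of_lt (min_le_left _ _) hzpos
          · exact le_trans (le_of_lt hsz) (le_max_right _ _)
        rw [Set.indicator_of_mem hmem]
        have habs : |s - z| = s - z := abs_of_pos (by linarith)
        rw [habs]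
        -- s ^ (p-1) ≤ c * ((s - z)^(p-1) + z)
        have hmax : s ≤ 2 * max (s - z) z := by
          rcases le_total (s - z) z with h | h
          · rw [max_eq_right h]; linarith
          · rw [max_eq_left h]; linarith
        have hmax_nonneg : 0 ≤ max (s - z) z := le_max_of_le_right (le_of_lt hzpos)
        have h1 : s ^ (p - 1) ≤ (2 * max (s - z) z) ^ (p - 1) :=
          pow_le_pow_left₀ hs0 hmax _
        have h2 : (2 * max (s - z) z) ^ (p - 1) = c * (max (s - z) z) ^ (p - 1) := by
          rw [mul_pow, hc]
        have h3 : (max (s - z) z) ^ (p - 1) ≤ (s - z) ^ (p - 1) + z ^ (p - 1) := by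
          rcases max_cases (s - z) z with ⟨he, _⟩ | ⟨he, _⟩
          · rw [he]; nlinarith [pow_nonneg (le_of_lt hzpos) (p - 1)]
          · rw [he]; nlinarith [pow_nonneg (by linarith : (0:ℝ) ≤ s - z) (p - 1)]
        have h4 : z ^ (p - 1) ≤ z := by
          calc z ^ (p - 1) ≤ z ^ 1 := pow_le_pow_of_le_one (le_of_lt hzpos) hz1 (by omega)
            _ = z := pow_one z
        calc s ^ (p - 1) ≤ c * (max (s - z) z) ^ (p - 1) := by rw [← h2]; exact h1
          _ ≤ c * ((s - z) ^ (p - 1) + z) := by nlinarith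
          _ = c * ((s - z) ^ (p - 1)) + c * z := by ring
          _ ≤ c * ((s - z) ^ (p - 1)) + c * z := le_refl _
          _ = c * ((s - z) ^ (p - 1) + z) := by ring
    · rw [if_neg hcond]
      have : 0 ≤ c * ((if P.pt n j ≤ t then
          Set.indicator (Set.uIoc (S (P.pt n j)) (S (P.pt n (j + 1))))
            (fun _ => |S (P.pt n (j + 1)) - z| ^ (p - 1)) z else 0) + z) := by
        apply mul_nonneg (le_of_lt hcpos)
        exact add_nonneg hind_nonneg (le_of_lt hzpos)
      exact this
  -- sum the termwise estimate
  have hsum : (∑ j ∈ Finset.range (P.N n),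
      if P.pt n j ≤ t ∧ X (P.pt n j) = 0 then (S (P.pt n (j + 1))) ^ (p - 1) else 0)
      ≤ c * discLT S P p n t z + c * (z * (P.N n : ℝ)) := by
    calc (∑ j ∈ Finset.range (P.N n),
        if P.pt n j ≤ t ∧ X (P.pt n j) = 0 then (S (P.pt n (j + 1))) ^ (p - 1) else 0)
        ≤ ∑ j ∈ Finset.range (P.N n),
          c * ((if P.pt n j ≤ t then
            Set.indicator (Set.uIoc (S (P.pt n j)) (S (P.pt n (j + 1))))
              (fun _ => |S (P.pt n (j + 1)) - z| ^ (p - 1)) z else 0) + z) :=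
          Finset.sum_le_sum hterm
      _ = c * discLT S P p n t z + c * (z * (P.N n : ℝ)) := by
          rw [discLT]
          rw [← Finset.mul_sum]
          rw [Finset.sum_add_distrib]
          rw [Finset.sum_const, Finset.card_range, nsmul_eq_mul]
          ring
  have hnonneg : 0 ≤ ∑ j ∈ Finset.range (P.N n),
      if P.pt n j ≤ t ∧ X (P.pt n j) = 0 then (S (P.pt n (j + 1))) ^ (p - 1) else 0 := by
    apply Finset.sum_nonneg
    intro j _
    split
    · exact pow_nonneg (hS _) _
    · exact le_refl _
  rw [Real.norm_eq_abs, abs_of_nonneg hnonneg]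
  have : c * discLT S P p n t z + c * (z * (P.N n : ℝ)) ≤ c * (2 * ε₁) + c * ε₁ := by
    have h1 : c * discLT S P p n t z ≤ c * (2 * ε₁) :=
      mul_le_mul_of_nonneg_left hd (le_of_lt hcpos)
    have h2 : c * (z * (P.N n : ℝ)) ≤ c * ε₁ :=
      mul_le_mul_of_nonneg_left hzN (le_of_lt hcpos)
    linarith
  have hc0 : c ≠ 0 := ne_of_gt hcpos
  have h3 : c * ε₁ = ε / 4 := by
    rw [hε₁def, ← mul_div_assoc, mul_comm c ε, mul_div_mul_right ε 4 hc0]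
  linarith

end Aux

/-- Lemmas 3 and 4: for continuous `X ∈ V_p(π)` with continuous local times of order `p`
for `X`, `X⁺` and `X⁻` along `π`,
`L^X_t(0) = L^{X⁺}_t(0) = lim_n Σ_{t_j≤t} 1_{X(t_j)=0}(X⁺(t_{j+1}))^{p-1}` and
`L^X_t(0) = L^{X⁻}_t(0) = lim_n Σ_{t_j≤t} 1_{X(t_j)=0}(X⁻(t_{j+1}))^{p-1}`. -/
theorem local_time_pos_neg_parts {T : ℝ} (hT : 0 < T) (P : PartitionSeq T)
    (p : ℕ) (hp : Even p) (hp2 : 2 ≤ p)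
    (X : ℝ → ℝ) (hXc : ContinuousOn X (Icc 0 T))
    (V : ℝ → ℝ) (hV : HasPVar P (p : ℝ) X V)
    (L Lp Lm : ℝ → ℝ → ℝ) (hL : HasCLT P p X L)
    (hLp : HasCLT P p (fun t => max (X t) 0) Lp)
    (hLm : HasCLT P p (fun t => max (-X t) 0) Lm) :
    ∀ t ∈ Icc (0 : ℝ) T,
      L t 0 = Lp t 0 ∧
      Tendsto (fun n => ∑ j ∈ Finset.range (P.N n),
          if P.pt n j ≤ t ∧ X (P.pt n j) = 0 then (max (X (P.pt n (j + 1))) 0) ^ (p - 1) else 0)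
        atTop (nhds (L t 0)) ∧
      L t 0 = Lm t 0 ∧
      Tendsto (fun n => ∑ j ∈ Finset.range (P.N n),
          if P.pt n j ≤ t ∧ X (P.pt n j) = 0 then (max (-X (P.pt n (j + 1))) 0) ^ (p - 1) else 0)
        atTop (nhds (L t 0)) := by
  intro t ht
  have hSp : ∀ y, (0 : ℝ) ≤ max (X y) 0 := fun y => le_max_right _ _
  have hSm : ∀ y, (0 : ℝ) ≤ max (-X y) 0 := fun y => le_max_right _ _
  have hSp0 : ∀ y, X y = 0 → max (X y) 0 = 0 := by intro y hy; rw [hy]; simp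
  have hSm0 : ∀ y, X y = 0 → max (-X y) 0 = 0 := by intro y hy; rw [hy]; simp
  have hLp0 : Lp t 0 = 0 := clt_zero P p hSp hLp ht
  have hLm0 : Lm t 0 = 0 := clt_zero P p hSm hLm ht
  -- L t x = Lp t x for x > 0
  have hxeq : ∀ x ∈ Ioi (0 : ℝ), L t x = Lp t x := by
    intro x hx
    rw [mem_Ioi] at hx
    have h1 : Tendsto (fun n => discLT X P p n t x) atTop (nhds (L t x)) :=
      (hL.2.1 t ht).tendsto_at x
    have h2 : Tendsto (fun n => discLT (fun s => max (X s) 0) P p n t x) atTop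
        (nhds (Lp t x)) := (hLp.2.1 t ht).tendsto_at x
    have hosc : ∀ᶠ n in atTop, oscP X P n < x := hL.1.eventually (gt_mem_nhds hx)
    have heq : (fun n => discLT X P p n t x)
        =ᶠ[atTop] fun n => discLT (fun s => max (X s) 0) P p n t x := by
      filter_upwards [hosc] with n hn
      apply discLT_pos_eq P p n t hx
      intro j hj
      exact lt_of_le_of_lt (abs_le_oscP P hXc n hj) hn
    exact tendsto_nhds_unique h1 (h2.congr' heq.symm)
  -- L t 0 = Lp t 0 by continuity from the right
  have hLcont : Continuous fun x : ℝ => L t x :=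
    hL.2.2.comp (continuous_const.prodMk continuous_id)
  have hLpcont : Continuous fun x : ℝ => Lp t x :=
    hLp.2.2.comp (continuous_const.prodMk continuous_id)
  have hL0eq : L t 0 = Lp t 0 := by
    have h1 : Tendsto (fun x : ℝ => L t x) (nhdsWithin 0 (Ioi 0)) (nhds (L t 0)) :=
      (hLcont.tendsto 0).mono_left nhdsWithin_le_nhds
    have h2 : Tendsto (fun x : ℝ => Lp t x) (nhdsWithin 0 (Ioi 0)) (nhds (Lp t 0)) :=
      (hLpcont.tendsto 0).mono_left nhdsWithin_le_nhds
    have he : (fun x : ℝ => L t x) =ᶠ[nhdsWithin (0 : ℝ) (Ioi 0)] fun x : ℝ => Lp t x :=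
      Filter.Eventually.mono self_mem_nhdsWithin hxeq
    exact tendsto_nhds_unique h1 (h2.congr' he.symm)
  have hL00 : L t 0 = 0 := by rw [hL0eq, hLp0]
  refine ⟨hL0eq, ?_, ?_, ?_⟩
  · rw [hL00]
    exact sum_tendsto_zero P hp2 X hSp hSp0 hLp ht
  · rw [hL00, hLm0]
  · rw [hL00]
    exact sum_tendsto_zero P hp2 X hSm hSm0 hLm ht
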